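/- Let Γ be a d-chorded simplicial complex. Then for every W ⊆ V(Γ) and every field k of characteristic 2, the reduced simplicial homology of the induced subcomplex of the d-closure satisfies H̃_i(Δ_d(Γ)_W; k) = 0 for all i with 0 ≤ i ≤ d−2 and for i = d. -/

import Mathlib

open Finset

namespace ChordedPaper

variable {V : Type*} [DecidableEq V] [Fintype V]

/-- A simplicial complex: a set of finsets (faces) closed under taking subsets.
(The vertices of the complex are the vertices of its faces, so all singletons of
vertices are automatically faces.) -/
def IsComplex (K : Set (Finset V)) : Prop :=
  ∀ F ∈ K, ∀ G ⊆ F, G ∈ K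

/-- The vertex set `V(K)` of a complex. -/
def verts (K : Set (Finset V)) : Set V :=
  {v | ∃ F ∈ K, v ∈ F}

/-- The `d`-dimensional faces (cardinality `d+1`) of `K`. -/
def dfaces (K : Set (Finset V)) (d : ℕ) : Set (Finset V) :=
  {F | F ∈ K ∧ F.card = d + 1}

/-- `K` is pure `d`-dimensional: every face is contained in a `d`-face. -/
def IsPureD (K : Set (Finset V)) (d : ℕ) : Prop :=
  ∀ F ∈ K, ∃ G ∈ dfaces K d, F ⊆ G

/-- The complex generated by a set of facets. -/
def gen (S : Set (Finset V)) : Set (Finset V) :=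
  {G | ∃ F ∈ S, G ⊆ F}

/-- The pure `d`-skeleton `K^{[d]}`: the complex whose facets are the `d`-faces of `K`. -/
def skel (K : Set (Finset V)) (d : ℕ) : Set (Finset V) :=
  gen (dfaces K d)

/-- The induced subcomplex `K_W` on a set `W` of vertices. -/
def induced (K : Set (Finset V)) (W : Set V) : Set (Finset V) :=
  {F | F ∈ K ∧ ↑F ⊆ W}

/-- Two `d`-faces of `S` are adjacent in a `d`-path if they share `d` vertices. -/
def adj (S : Set (Finset V)) (d : ℕ) (F G : Finset V) : Prop :=
  F ∈ S ∧ G ∈ S ∧ (F ∩ G).card = d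

/-- `d`-path-connectedness: any two `d`-faces are joined by a `d`-path. -/
def PathConn (K : Set (Finset V)) (d : ℕ) : Prop :=
  ∀ F ∈ dfaces K d, ∀ G ∈ dfaces K d, Relation.ReflTransGen (adj (dfaces K d) d) F G

/-- A `d`-dimensional cycle: a pure `d`-dimensional, `d`-path-connected complex in which
every `(d-1)`-face lies in an even number of `d`-faces. -/
def IsCycle (Ω : Set (Finset V)) (d : ℕ) : Prop :=
  IsComplex Ω ∧ IsPureD Ω d ∧ (dfaces Ω d).Nonempty ∧ PathConn Ω d ∧
    ∀ f ∈ Ω, Finset.card f = d → Even {F | F ∈ dfaces Ω d ∧ f ⊆ F}.ncard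

/-- A `d`-dimensional cycle in the complex `Γ`. -/
def CycleIn (Γ Ω : Set (Finset V)) (d : ℕ) : Prop :=
  Ω ⊆ Γ ∧ IsCycle Ω d

/-- Face-minimality: no strict subset of the `d`-faces of `Ω` forms a `d`-dimensional cycle. -/
def FaceMinimal (Ω : Set (Finset V)) (d : ℕ) : Prop :=
  ∀ S : Set (Finset V), S ⊂ dfaces Ω d → ¬ IsCycle (gen S) d

/-- Vertex-minimality of a cycle `Ω` in `Γ`: no `d`-dimensional cycle in `Γ` lies on a
strict subset of the vertices of `Ω`. -/
def VertexMinimal (Γ Ω : Set (Finset V)) (d : ℕ) : Prop :=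
  ∀ Ω', CycleIn Γ Ω' d → ¬ (verts Ω' ⊂ verts Ω)

/-- `d`-completeness: every `(d+1)`-subset of the vertex set is a face. -/
def DComplete (K : Set (Finset V)) (d : ℕ) : Prop :=
  ∀ S : Finset V, ↑S ⊆ verts K → S.card = d + 1 → S ∈ K

/-- A chord set `C` of the `d`-dimensional cycle `Ω` in `Γ`. -/
def ChordSet (Γ Ω : Set (Finset V)) (d : ℕ) (C : Set (Finset V)) : Prop :=
  C ⊆ dfaces Γ d ∧ (∀ F ∈ C, F ∉ Ω) ∧ (∀ F ∈ C, ↑F ⊆ verts Ω) ∧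
    ∃ (n : ℕ) (Ωi : Fin n → Set (Finset V)), 2 ≤ n ∧ (∀ i, IsCycle (Ωi i) d) ∧
      (⋃ i, dfaces (Ωi i) d) = dfaces Ω d ∪ C ∧
      (∀ F ∈ C, Even {i | F ∈ dfaces (Ωi i) d}.ncard) ∧
      (∀ F ∈ dfaces Ω d, Odd {i | F ∈ dfaces (Ωi i) d}.ncard) ∧
      (∀ i, (verts (Ωi i)).ncard < (verts Ω).ncard)

/-- `Γ` is `d`-chorded: every face-minimal `d`-dimensional cycle in `Γ` that is not
`d`-complete has a chord set in `Γ`. -/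
def DChorded (Γ : Set (Finset V)) (d : ℕ) : Prop :=
  ∀ Ω, CycleIn Γ Ω d → FaceMinimal Ω d → ¬ DComplete Ω d → ∃ C, ChordSet Γ Ω d C

/-- `Γ` is `d`-cycle-complete: every vertex-minimal `d`-dimensional cycle in `Γ` is
`d`-complete. -/
def DCycleComplete (Γ : Set (Finset V)) (d : ℕ) : Prop :=
  ∀ Ω, CycleIn Γ Ω d → VertexMinimal Γ Ω d → DComplete Ω d

/-- The `d`-closure `Δ_d(K)` of the complex `K`, relative to the vertex set `W`:
it contains the faces of `K`, all subsets of `W` of size at most `d`, and every subset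
`S` of `W` with `|S| > d+1` all of whose `(d+1)`-subsets are faces of `K`. -/
def closure (W : Set V) (K : Set (Finset V)) (d : ℕ) : Set (Finset V) :=
  K ∪ {S | ↑S ⊆ W ∧ S.card ≤ d} ∪
    {S | ↑S ⊆ W ∧ d + 1 < S.card ∧ ∀ T ⊆ S, T.card = d + 1 → T ∈ K}

/-- A `d`-dimensional tree: a pure `d`-dimensional complex with no `d`-dimensional cycles. -/
def IsTree (K : Set (Finset V)) (d : ℕ) : Prop :=
  IsComplex K ∧ IsPureD K d ∧ ∀ Ω, ¬ CycleIn K Ω d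

/-- The unsigned boundary map on chains (appropriate over rings of characteristic 2):
a face is sent to the sum of the faces obtained by deleting one vertex. -/
noncomputable def ubd {R : Type*} [AddCommMonoid R] (c : Finset V →₀ R) : Finset V →₀ R :=
  c.sum fun F a => F.sum fun v => Finsupp.single (F.erase v) a

/-- The signed (oriented) boundary map on chains, the vertices of each face being listed
in increasing order. -/
noncomputable def sbd [LinearOrder V] {R : Type*} [Ring R] (c : Finset V →₀ R) : Finset V →₀ R :=
  c.sum fun F a =>
    F.sum fun v => Finsupp.single (F.erase v) ((-1 : R) ^ (F.filter fun w => w < v).card * a)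

/-- `c` is an `i`-chain on the complex `K`: it is supported on `i`-faces of `K`. -/
def ChainOn {R : Type*} [Zero R] (K : Set (Finset V)) (i : ℕ) (c : Finset V →₀ R) : Prop :=
  ∀ F ∈ c.support, F ∈ K ∧ F.card = i + 1

/-- Vanishing of the reduced simplicial homology `H̃_i(K; R)` for the unsigned boundary
map (this is reduced simplicial homology when `R` has characteristic 2): every `i`-chain
with vanishing boundary (for `i = 0`, the boundary at the empty face is the augmentation ε)
is the boundary of an `(i+1)`-chain. -/
def RedHomZeroU (K : Set (Finset V)) (R : Type*) [AddCommMonoid R] (i : ℕ) : Prop :=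
  ∀ c : Finset V →₀ R, ChainOn K i c → ubd c = 0 →
    ∃ b : Finset V →₀ R, ChainOn K (i + 1) b ∧ ubd b = c

/-- Vanishing of the reduced simplicial homology `H̃_i(K; R)` (oriented chains). -/
def RedHomZeroS [LinearOrder V] (K : Set (Finset V)) (R : Type*) [Ring R] (i : ℕ) : Prop :=
  ∀ c : Finset V →₀ R, ChainOn K i c → sbd c = 0 →
    ∃ b : Finset V →₀ R, ChainOn K (i + 1) b ∧ sbd b = c

/-- Orientability of a `d`-dimensional cycle: there is a choice of signs on its `d`-faces
making the resulting ℤ-chain have zero (oriented) boundary. -/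
def Orientable [LinearOrder V] (Ω : Set (Finset V)) (d : ℕ) : Prop :=
  ∃ c : Finset V →₀ ℤ, ↑c.support = dfaces Ω d ∧
    (∀ F ∈ c.support, c F = 1 ∨ c F = -1) ∧ sbd c = 0

/-- Orientable-vertex-minimality of a cycle `Ω` in `Γ`: no orientable `d`-dimensional
cycle in `Γ` lies on a strict subset of the vertices of `Ω`. -/
def OrientVertexMinimal [LinearOrder V] (Γ Ω : Set (Finset V)) (d : ℕ) : Prop :=
  ∀ Ω', CycleIn Γ Ω' d → Orientable Ω' d → ¬ (verts Ω' ⊂ verts Ω)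

/-- `Γ` is orientably-`d`-cycle-complete: every orientably-vertex-minimal (orientable)
`d`-dimensional cycle in `Γ` is `d`-complete. -/
def OrientDCycleComplete [LinearOrder V] (Γ : Set (Finset V)) (d : ℕ) : Prop :=
  ∀ Ω, CycleIn Γ Ω d → Orientable Ω d → OrientVertexMinimal Γ Ω d → DComplete Ω d

/-- A minimal non-face of `K`: a subset of the vertex set that is not a face, all of whose
proper subsets are faces. -/
def MinNonFace (K : Set (Finset V)) (S : Finset V) : Prop :=
  ↑S ⊆ verts K ∧ S ∉ K ∧ ∀ T ⊂ S, T ∈ K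

set_option linter.unusedSectionVars false
set_option maxHeartbeats 1000000

section basic
variable {R : Type*} [AddCommMonoid R]

lemma ubd_zero : ubd (0 : Finset V →₀ R) = 0 := Finsupp.sum_zero_index

lemma ubd_add (c c' : Finset V →₀ R) : ubd (c + c') = ubd c + ubd c' := by
  classical
  refine Finsupp.sum_add_index' (fun F => ?_) (fun F a b => ?_)
  · simp
  · simp [Finsupp.single_add, Finset.sum_add_distrib]

lemma ubd_single (F : Finset V) (a : R) :
    ubd (Finsupp.single F a) = F.sum fun v => Finsupp.single (F.erase v) a := by
  classical
  refine Finsupp.sum_single_index ?_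
  simp

noncomputable def cone (v : V) (c : Finset V →₀ R) : Finset V →₀ R :=
  c.sum fun F a => if v ∈ F then 0 else Finsupp.single (insert v F) a

lemma cone_zero (v : V) : cone v (0 : Finset V →₀ R) = 0 := Finsupp.sum_zero_index

lemma cone_add (v : V) (c c' : Finset V →₀ R) : cone v (c + c') = cone v c + cone v c' := by
  classical
  refine Finsupp.sum_add_index' (fun F => ?_) (fun F a b => ?_)
  · simp
  · by_cases hv : v ∈ F <;> simp [hv, Finsupp.single_add]

lemma cone_single (v : V) (F : Finset V) (a : R) :
    cone v (Finsupp.single F a) =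
      if v ∈ F then 0 else Finsupp.single (insert v F) a := by
  classical
  refine Finsupp.sum_single_index ?_
  simp

lemma cone_support_subset (v : V) (c : Finset V →₀ R) :
    (cone v c).support ⊆ (c.support.filter fun F => v ∉ F).image (insert v) := by
  classical
  intro f hf
  simp only [Finset.mem_image, Finset.mem_filter]
  by_contra h
  push_neg at h
  refine (Finsupp.mem_support_iff.mp hf) ?_
  rw [cone, Finsupp.sum_apply, Finsupp.sum]
  refine Finset.sum_eq_zero fun F hF => ?_
  by_cases hv : v ∈ F
  · rw [if_pos hv, Finsupp.coe_zero, Pi.zero_apply]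
  · rw [if_neg hv, Finsupp.single_apply, if_neg (fun e => h F ⟨hF, hv⟩ e)]

end basic

section char2
variable {R : Type*} [Ring R] [CharP R 2]

lemma two_nsmul_eq_zero (x : R) : x + x = 0 := by
  have h2 : (2 : R) = 0 := by exact_mod_cast CharP.cast_eq_zero R 2
  rw [← two_mul, h2, zero_mul]

lemma cone_homotopy (v : V) (c : Finset V →₀ R) :
    ubd (cone v c) + cone v (ubd c) = c := by
  classical
  induction c using Finsupp.induction with
  | zero => simp [ubd_zero, cone_zero]
  | single_add F a c _ _ ih =>
      rw [cone_add, ubd_add, ubd_add, cone_add, add_add_add_comm, ih]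
      congr 1
      rw [cone_single, ubd_single]
      have coneSum : ∀ (s : Finset V) (g : V → Finset V →₀ R),
          cone v (∑ x ∈ s, g x) = ∑ x ∈ s, cone v (g x) := by
        intro s g
        induction s using Finset.induction with
        | empty => simp [cone_zero]
        | insert _ _ hx ih => rw [Finset.sum_insert hx, Finset.sum_insert hx, cone_add, ih]
      by_cases hv : v ∈ F
      · rw [if_pos hv, ubd_zero, zero_add, coneSum]
        rw [Finset.sum_eq_single_of_mem v hv
          (fun w hw hne => by rw [cone_single, if_pos (Finset.mem_erase.mpr ⟨hne.symm, hv⟩)])]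
        rw [cone_single, if_neg (Finset.notMem_erase v F), Finset.insert_erase hv]
      · rw [if_neg hv, coneSum, ubd_single, Finset.sum_insert hv,
          Finset.erase_insert hv]
        have hrw : ∀ w ∈ F, Finsupp.single ((insert v F).erase w) a =
            Finsupp.single (insert v (F.erase w)) a := by
          intro w hw
          rw [Finset.erase_insert_of_ne (ne_of_mem_of_not_mem hw hv).symm]
        have hrw2 : ∀ w ∈ F, cone v (Finsupp.single (F.erase w) a) =
            Finsupp.single (insert v (F.erase w)) a := by
          intro w hw
          rw [cone_single, if_neg (fun h => hv (Finset.mem_of_mem_erase h))]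
        rw [Finset.sum_congr rfl hrw, Finset.sum_congr rfl hrw2, add_assoc,
          ← two_smul R, show (2:R) = 0 by exact_mod_cast CharP.cast_eq_zero R 2, zero_smul,
          add_zero]
end char2

section extra
variable {R : Type*} [AddCommMonoid R]
lemma ubd_finset_sum {ι : Type*} (s : Finset ι) (g : ι → Finset V →₀ R) :
    ubd (∑ x ∈ s, g x) = ∑ x ∈ s, ubd (g x) := by
  induction s using Finset.cons_induction with
  | empty => simp [ubd_zero]
  | cons x s hx ih => rw [Finset.sum_cons, Finset.sum_cons, ubd_add, ih]
lemma ubd_support_subset (c : Finset V →₀ R) :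
    (ubd c).support ⊆ c.support.biUnion fun F => F.image fun v => F.erase v := by
  intro f hf
  simp only [Finset.mem_biUnion, Finset.mem_image]
  by_contra h
  push_neg at h
  refine (Finsupp.mem_support_iff.mp hf) ?_
  rw [ubd, Finsupp.sum_apply, Finsupp.sum]
  refine Finset.sum_eq_zero fun F hF => ?_
  rw [Finsupp.finset_sum_apply]
  refine Finset.sum_eq_zero fun v hv => ?_
  rw [Finsupp.single_apply, if_neg]
  exact fun e => h F hF v hv e
end extra


lemma zmod2_cases : ∀ a : ZMod 2, a = 0 ∨ a = 1 := by decide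

lemma zmod2_self_add : ∀ a : ZMod 2, a + a = 0 := by decide

/-- characteristic chain of a finite set of faces, over `ZMod 2`. -/
noncomputable def chain (A : Finset (Finset V)) : Finset V →₀ ZMod 2 :=
  ∑ F ∈ A, Finsupp.single F 1

lemma chain_apply (A : Finset (Finset V)) (F : Finset V) :
    chain A F = if F ∈ A then 1 else 0 := by
  rw [chain, Finsupp.finset_sum_apply]
  rw [Finset.sum_congr rfl (fun G _ => Finsupp.single_apply (a := G) (b := (1:ZMod 2)) (a' := F))]
  rw [Finset.sum_ite_eq' A F (fun _ => (1:ZMod 2))]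

lemma chain_support (A : Finset (Finset V)) : (chain A).support = A := by
  ext F
  rw [Finsupp.mem_support_iff, chain_apply]
  split <;> simp_all

lemma chain_eq_self (z : Finset V →₀ ZMod 2) : chain z.support = z := by
  ext F
  rw [chain_apply]
  split
  · rcases zmod2_cases (z F) with h | h
    · exact absurd h (Finsupp.mem_support_iff.mp (by assumption))
    · rw [h]
  · exact (Finsupp.notMem_support_iff.mp (by assumption)).symm

lemma chain_add_chain_subset {T A : Finset (Finset V)} (hT : T ⊆ A) :
    chain A + chain T = chain (A \ T) := by
  ext F
  rw [Finsupp.add_apply, chain_apply, chain_apply, chain_apply]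
  by_cases h1 : F ∈ T
  · rw [if_pos h1, if_pos (hT h1), if_neg (fun hm => (Finset.mem_sdiff.mp hm).2 h1),
      zmod2_self_add _]
  · by_cases h2 : F ∈ A <;> simp [h1, h2, Finset.mem_sdiff]

lemma count_erase {d : ℕ} {F f : Finset V} (hF : F.card = d + 1) (hf : f.card = d) :
    (F.filter fun w => F.erase w = f).card = if f ⊆ F then 1 else 0 := by
  split
  · next h =>
      obtain ⟨w₀, hw₀⟩ : ∃ w₀, F \ f = {w₀} := by
        rw [← Finset.card_eq_one, Finset.card_sdiff_of_subset h, hF, hf]; omega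
      have hw₀F : w₀ ∈ F ∧ w₀ ∉ f := by
        have : w₀ ∈ F \ f := hw₀ ▸ Finset.mem_singleton_self w₀
        exact ⟨(Finset.mem_sdiff.mp this).1, (Finset.mem_sdiff.mp this).2⟩
      rw [Finset.card_eq_one]
      refine ⟨w₀, Finset.eq_singleton_iff_unique_mem.mpr ⟨?_, ?_⟩⟩
      · refine Finset.mem_filter.mpr ⟨hw₀F.1, ?_⟩
        have hsub : f ⊆ F.erase w₀ := Finset.subset_erase.mpr ⟨h, hw₀F.2⟩
        have hcard : (F.erase w₀).card = d := by
          rw [Finset.card_erase_of_mem hw₀F.1, hF]; omega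
        exact (Finset.eq_of_subset_of_card_le hsub (by omega)).symm
      · intro w hw
        obtain ⟨hwF, hwe⟩ := Finset.mem_filter.mp hw
        have hwf : w ∉ f := fun hwf => (Finset.notMem_erase w F) (hwe ▸ hwf)
        have : w ∈ F \ f := Finset.mem_sdiff.mpr ⟨hwF, hwf⟩
        rw [hw₀] at this
        exact Finset.mem_singleton.mp this
  · next h =>
      rw [Finset.card_eq_zero, Finset.filter_eq_empty_iff]
      intro w hw he
      exact h (he ▸ Finset.erase_subset w F)

lemma ubd_chain_apply {d : ℕ} {A : Finset (Finset V)} (hA : ∀ F ∈ A, F.card = d + 1)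
    {f : Finset V} (hf : f.card = d) :
    ubd (chain A) f = ((A.filter fun F => f ⊆ F).card : ZMod 2) := by
  rw [chain, ubd_finset_sum, Finsupp.finset_sum_apply]
  have : ∀ F ∈ A, (ubd (Finsupp.single F (1 : ZMod 2))) f = if f ⊆ F then 1 else 0 := by
    intro F hF
    rw [ubd_single, Finsupp.finset_sum_apply]
    rw [Finset.sum_congr rfl (fun w _ => Finsupp.single_apply)]
    rw [Finset.sum_boole, count_erase (hA F hF) hf]
    split <;> simp
  rw [Finset.sum_congr rfl this, Finset.sum_boole]

lemma ubd_chain_eq_zero {d : ℕ} {A : Finset (Finset V)} (hA : ∀ F ∈ A, F.card = d + 1)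
    (hpar : ∀ f : Finset V, f.card = d → Even ((A.filter fun F => f ⊆ F).card)) :
    ubd (chain A) = 0 := by
  ext f
  rw [Finsupp.coe_zero, Pi.zero_apply]
  by_cases hf : f.card = d
  · rw [ubd_chain_apply hA hf]
    obtain ⟨m, hm⟩ := hpar f hf
    rw [hm, Nat.cast_add, zmod2_self_add _]
  · by_contra hne
    have hfs : f ∈ (ubd (chain A)).support := Finsupp.mem_support_iff.mpr hne
    have := ubd_support_subset _ hfs
    simp only [Finset.mem_biUnion, Finset.mem_image, chain_support] at this
    obtain ⟨F, hFA, v, hv, rfl⟩ := this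
    rw [Finset.card_erase_of_mem hv, hA F hFA] at hf
    omega

lemma parity_of_ubd_chain {d : ℕ} {A : Finset (Finset V)} (hA : ∀ F ∈ A, F.card = d + 1)
    (h : ubd (chain A) = 0) :
    ∀ f : Finset V, f.card = d → Even ((A.filter fun F => f ⊆ F).card) := by
  intro f hf
  have h0 : (((A.filter fun F => f ⊆ F).card : ℕ) : ZMod 2) = 0 := by
    rw [← ubd_chain_apply hA hf, h, Finsupp.coe_zero, Pi.zero_apply]
  obtain ⟨m, hm⟩ := (ZMod.natCast_eq_zero_iff _ 2).mp h0
  exact ⟨m, by omega⟩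


section combinat
variable {d : ℕ}

lemma isComplex_gen (S : Set (Finset V)) : IsComplex (gen S) := by
  rintro F ⟨F', hF', hFF'⟩ G hGF
  exact ⟨F', hF', hGF.trans hFF'⟩

lemma dfaces_gen {A : Set (Finset V)} (hA : ∀ F ∈ A, F.card = d + 1) :
    dfaces (gen A) d = A := by
  ext G
  constructor
  · rintro ⟨⟨F, hF, hGF⟩, hGcard⟩
    rwa [Finset.eq_of_subset_of_card_le hGF (by rw [hA F hF, hGcard])]
  · intro hG
    exact ⟨⟨G, hG, subset_rfl⟩, hA G hG⟩

lemma isPureD_gen {A : Set (Finset V)} (hA : ∀ F ∈ A, F.card = d + 1) :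
    IsPureD (gen A) d := by
  rintro F ⟨F', hF', hFF'⟩
  exact ⟨F', (dfaces_gen hA).symm ▸ hF', hFF'⟩

lemma verts_gen_coe (A : Finset (Finset V)) : verts (gen (↑A : Set (Finset V))) = ↑(A.biUnion id) := by
  ext v
  simp only [verts, gen, Set.mem_setOf_eq, Finset.coe_biUnion, Set.mem_iUnion, Finset.mem_coe,
    id_eq]
  constructor
  · rintro ⟨F, ⟨F', hF', hFF'⟩, hv⟩
    exact ⟨F', hF', hFF' hv⟩
  · rintro ⟨F, hF, hv⟩
    exact ⟨F, ⟨F, hF, subset_rfl⟩, hv⟩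

lemma ncard_filter (A : Finset (Finset V)) (p : Finset V → Prop) [DecidablePred p] :
    {F | F ∈ (↑A : Set (Finset V)) ∧ p F}.ncard = (A.filter p).card := by
  rw [show {F | F ∈ (↑A : Set (Finset V)) ∧ p F} = ↑(A.filter p) by
    ext F; simp [Finset.mem_filter]]
  exact Set.ncard_coe_finset _

lemma verts_eq_of_pure {K : Set (Finset V)} (hpure : IsPureD K d)
    (hcx : ∀ F ∈ dfaces K d, ∀ v ∈ F, ∃ G ∈ K, v ∈ G) :
    verts K = {v | ∃ F ∈ dfaces K d, v ∈ F} := by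
  ext v
  constructor
  · rintro ⟨F, hF, hv⟩
    obtain ⟨G, hG, hFG⟩ := hpure F hF
    exact ⟨G, hG, hFG hv⟩
  · rintro ⟨F, hF, hv⟩
    exact ⟨F, hF.1, hv⟩

lemma exists_faceMinimal :
    ∀ (N : ℕ) (T : Finset (Finset V)), T.card ≤ N → (∀ F ∈ T, F.card = d + 1) →
      IsCycle (gen (↑T : Set (Finset V))) d →
      ∃ T' : Finset (Finset V), T' ⊆ T ∧ T'.Nonempty ∧
        IsCycle (gen (↑T' : Set (Finset V))) d ∧ FaceMinimal (gen (↑T' : Set (Finset V))) d := by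
  intro N
  induction N with
  | zero =>
      intro T hcard _ hcyc
      obtain ⟨F, hF⟩ := hcyc.2.2.1
      rw [dfaces_gen (by exact_mod_cast ‹∀ F ∈ T, F.card = d + 1›)] at hF
      simp only [Nat.le_zero, Finset.card_eq_zero] at hcard
      subst hcard
      simp at hF
  | succ N ih =>
      intro T hcard hT hcyc
      by_cases hmin : FaceMinimal (gen (↑T : Set (Finset V))) d
      · refine ⟨T, subset_rfl, ?_, hcyc, hmin⟩
        obtain ⟨F, hF⟩ := hcyc.2.2.1
        rw [dfaces_gen (by exact_mod_cast hT)] at hF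
        exact ⟨F, hF⟩
      · rw [FaceMinimal] at hmin
        push_neg at hmin
        obtain ⟨S', hS'sub, hS'cyc⟩ := hmin
        rw [dfaces_gen (by exact_mod_cast hT)] at hS'sub
        have hfin : S'.Finite := Set.toFinite S'
        set T₂ := hfin.toFinset with hT₂
        have hcoe : (↑T₂ : Set (Finset V)) = S' := hfin.coe_toFinset
        have hT₂T : T₂ ⊂ T := by
          rw [← Finset.coe_ssubset, hcoe]
          exact hS'sub
        have hcard₂ : T₂.card ≤ N := by
          have := Finset.card_lt_card hT₂T
          omega
        obtain ⟨T', h1, h2, h3, h4⟩ := ih T₂ hcard₂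
          (fun F hF => hT F (hT₂T.1 hF)) (by rwa [hcoe])
        exact ⟨T', h1.trans hT₂T.1, h2, h3, h4⟩

lemma component_isCycle (S : Finset (Finset V)) (hS : ∀ F ∈ S, F.card = d + 1)
    (hpar : ∀ f : Finset V, f.card = d → Even ((S.filter fun F => f ⊆ F).card))
    (F₀ : Finset V) (hF₀ : F₀ ∈ S) :
    ∃ T : Finset (Finset V), T ⊆ S ∧ T.Nonempty ∧
      IsCycle (gen (↑T : Set (Finset V))) d ∧ FaceMinimal (gen (↑T : Set (Finset V))) d := by
  classical
  set r := adj (↑S : Set (Finset V)) d with hr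
  set T := S.filter (fun G => Relation.ReflTransGen r F₀ G) with hTdef
  have hTS : T ⊆ S := Finset.filter_subset _ _
  have hT : ∀ F ∈ T, F.card = d + 1 := fun F hF => hS F (hTS hF)
  have hF₀T : F₀ ∈ T := Finset.mem_filter.mpr ⟨hF₀, Relation.ReflTransGen.refl⟩
  have hclose : ∀ G ∈ S, ∀ F ∈ T, (F ∩ G).card = d → G ∈ T := by
    intro G hG F hF hcap
    obtain ⟨hFS, hpath⟩ := Finset.mem_filter.mp hF
    exact Finset.mem_filter.mpr ⟨hG, hpath.tail ⟨hFS, hG, hcap⟩⟩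
  have hkey : ∀ f : Finset V, f.card = d → ∀ F ∈ T, f ⊆ F →
      S.filter (fun G => f ⊆ G) = T.filter (fun G => f ⊆ G) := by
    intro f hf F hF hfF
    apply Finset.Subset.antisymm
    · intro G hG
      obtain ⟨hGS, hfG⟩ := Finset.mem_filter.mp hG
      by_cases hFG : F = G
      · exact Finset.mem_filter.mpr ⟨hFG ▸ hF, hfG⟩
      · have hsub : f ⊆ F ∩ G := Finset.subset_inter hfF hfG
        have hge : d ≤ (F ∩ G).card := hf ▸ Finset.card_le_card hsub
        have hle : (F ∩ G).card ≤ d := by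
          by_contra hlt
          push_neg at hlt
          have heq : F ∩ G = F := Finset.eq_of_subset_of_card_le
            Finset.inter_subset_left (by rw [hS F (hTS hF)]; omega)
          have : F ⊆ G := by rw [← heq]; exact Finset.inter_subset_right
          exact hFG (Finset.eq_of_subset_of_card_le this
            (by rw [hS F (hTS hF), hS G hGS]))
        exact Finset.mem_filter.mpr ⟨hclose G hGS F hF (le_antisymm hle hge), hfG⟩
    · exact Finset.filter_subset_filter _ hTS
  have hTcoe : ∀ F ∈ (↑T : Set (Finset V)), F.card = d + 1 := by
    intro F hF; exact hT F (Finset.mem_coe.mp hF)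
  have hcyc : IsCycle (gen (↑T : Set (Finset V))) d := by
    refine ⟨isComplex_gen _, isPureD_gen hTcoe, ?_, ?_, ?_⟩
    · exact ⟨F₀, (dfaces_gen hTcoe).symm ▸ (Finset.mem_coe.mpr hF₀T)⟩
    · -- path connectivity
      have hstr : ∀ G, Relation.ReflTransGen r F₀ G →
          Relation.ReflTransGen (adj (↑T : Set (Finset V)) d) F₀ G := by
        intro G hG
        induction hG with
        | refl => exact Relation.ReflTransGen.refl
        | tail hab hbc ih =>
            rename_i b c
            have hbT : b ∈ T := Finset.mem_filter.mpr ⟨hbc.1, hab⟩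
            have hcT : c ∈ T := Finset.mem_filter.mpr ⟨hbc.2.1, hab.tail hbc⟩
            exact ih.tail ⟨Finset.mem_coe.mpr hbT, Finset.mem_coe.mpr hcT, hbc.2.2⟩
      have hsymm : Symmetric (adj (↑T : Set (Finset V)) d) := by
        rintro a b ⟨h1, h2, h3⟩
        exact ⟨h2, h1, by rwa [Finset.inter_comm]⟩
      intro F hF G hG
      rw [dfaces_gen hTcoe] at hF hG
      have pF := hstr F (Finset.mem_filter.mp (Finset.mem_coe.mp hF)).2
      have pG := hstr G (Finset.mem_filter.mp (Finset.mem_coe.mp hG)).2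
      rw [dfaces_gen hTcoe]
      exact ((haveI : Std.Symm (adj (↑T : Set (Finset V)) d) := ⟨fun a b h => hsymm h⟩; Std.Symm.symm _ _ pF)).trans pG
    · intro f hfgen hfcard
      rw [show {F | F ∈ dfaces (gen (↑T : Set (Finset V))) d ∧ f ⊆ F}
          = {F | F ∈ (↑T : Set (Finset V)) ∧ f ⊆ F} by rw [dfaces_gen hTcoe]]
      rw [ncard_filter]
      obtain ⟨F₁, hF₁, hfF₁⟩ := hfgen
      rw [← hkey f hfcard F₁ (Finset.mem_coe.mp hF₁) hfF₁]
      exact hpar f hfcard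
  obtain ⟨T', h1, h2, h3, h4⟩ := exists_faceMinimal T.card T le_rfl hT hcyc
  exact ⟨T', h1.trans hTS, h2, h3, h4⟩

end combinat

section main
variable {d : ℕ}

lemma even_cast_zmod2 {n : ℕ} (h : Even n) : (n : ZMod 2) = 0 := by
  obtain ⟨m, rfl⟩ := h
  rw [Nat.cast_add, zmod2_self_add]

lemma odd_cast_zmod2 {n : ℕ} (h : Odd n) : (n : ZMod 2) = 1 := by
  obtain ⟨m, rfl⟩ := h
  have : ((2 * m : ℕ) : ZMod 2) = 0 := by
    rw [two_mul, Nat.cast_add, zmod2_self_add]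
  rw [Nat.cast_add, this, Nat.cast_one, zero_add]

lemma self_add_self (c : Finset V →₀ ZMod 2) : c + c = 0 := by
  ext F
  rw [Finsupp.add_apply, zmod2_self_add, Finsupp.coe_zero, Pi.zero_apply]

lemma chainOn_zero {R : Type*} [Zero R] (K : Set (Finset V)) (i : ℕ) :
    ChainOn K i (0 : Finset V →₀ R) := by
  intro F hF
  simp at hF

lemma chainOn_add {R : Type*} [AddCommMonoid R] {K : Set (Finset V)} {i : ℕ}
    {a b : Finset V →₀ R} (ha : ChainOn K i a) (hb : ChainOn K i b) : ChainOn K i (a + b) := by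
  intro F hF
  rcases Finset.mem_union.mp (Finsupp.support_add hF) with h | h
  · exact ha F h
  · exact hb F h

lemma chainOn_sum {R : Type*} [AddCommMonoid R] {K : Set (Finset V)} {i : ℕ}
    {ι : Type*} (s : Finset ι) (g : ι → Finset V →₀ R) (h : ∀ x ∈ s, ChainOn K i (g x)) :
    ChainOn K i (∑ x ∈ s, g x) := by
  induction s using Finset.cons_induction with
  | empty => simpa using chainOn_zero K i
  | cons x s hx ih =>
      rw [Finset.sum_cons]
      exact chainOn_add (h x (Finset.mem_cons_self x s))
        (ih fun y hy => h y (Finset.mem_cons.mpr (Or.inr hy)))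

lemma dface_mem_induced_closure {Γ : Set (Finset V)} {W : Set V} {F : Finset V}
    (h1 : F ∈ Γ) (h2 : ↑F ⊆ W) : F ∈ induced (closure (verts Γ) Γ d) W :=
  ⟨Or.inl (Or.inl h1), h2⟩

lemma dface_of_mem_induced_closure {Γ : Set (Finset V)} {W : Set V} {F : Finset V}
    (h : F ∈ induced (closure (verts Γ) Γ d) W) (hc : F.card = d + 1) : F ∈ Γ ∧ ↑F ⊆ W := by
  obtain ⟨hcl, hFW⟩ := h
  refine ⟨?_, hFW⟩
  rcases hcl with (h | h) | h
  · exact h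
  · exact absurd h.2 (by omega)
  · exact absurd h.2.1 (by omega)

lemma smallface_mem_induced_closure {Γ : Set (Finset V)} {W : Set V} (hW : W ⊆ verts Γ)
    {S : Finset V} (hSW : ↑S ⊆ W) (hcard : S.card ≤ d) :
    S ∈ induced (closure (verts Γ) Γ d) W :=
  ⟨Or.inl (Or.inr ⟨hSW.trans hW, hcard⟩), hSW⟩

lemma topface_mem_induced_closure {Γ : Set (Finset V)} {W : Set V} (hW : W ⊆ verts Γ)
    {S : Finset V} (hSW : ↑S ⊆ W) (hcard : S.card = d + 2)
    (hsub : ∀ T ⊆ S, T.card = d + 1 → T ∈ Γ) :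
    S ∈ induced (closure (verts Γ) Γ d) W :=
  ⟨Or.inr ⟨hSW.trans hW, by omega, hsub⟩, hSW⟩

lemma gf2_bound {Γ : Set (Finset V)} (hcomplex : IsComplex Γ)
    (hchorded : DChorded Γ d) {W : Set V} (hW : W ⊆ verts Γ) :
    ∀ n m (z : Finset V →₀ ZMod 2), (z.support.biUnion id).card ≤ n → z.support.card ≤ m →
      ChainOn (induced (closure (verts Γ) Γ d) W) d z → ubd z = 0 →
      ∃ w, ChainOn (induced (closure (verts Γ) Γ d) W) (d + 1) w ∧ ubd w = z := by
  classical
  intro n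
  induction n using Nat.strong_induction_on with
  | _ n ihn =>
  intro m
  induction m using Nat.strong_induction_on with
  | _ m ihm =>
  intro z hn hm hchain hz
  rcases Finset.eq_empty_or_nonempty z.support with hSemp | ⟨F₀, hF₀⟩
  · exact ⟨0, chainOn_zero _ _, by rw [ubd_zero, Finsupp.support_eq_empty.mp hSemp]⟩
  set S := z.support with hSdef
  have hSface : ∀ F ∈ S, F ∈ Γ ∧ ↑F ⊆ W ∧ F.card = d + 1 := by
    intro F hF
    obtain ⟨h1, h2⟩ := hchain F hF
    obtain ⟨h3, h4⟩ := dface_of_mem_induced_closure h1 h2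
    exact ⟨h3, h4, h2⟩
  have hScard : ∀ F ∈ S, F.card = d + 1 := fun F hF => (hSface F hF).2.2
  have hzchain : chain S = z := chain_eq_self z
  have hpar : ∀ f : Finset V, f.card = d → Even ((S.filter fun F => f ⊆ F).card) :=
    parity_of_ubd_chain hScard (by rwa [hzchain])
  obtain ⟨T, hTS, hTne, hTcyc, hTmin⟩ := component_isCycle S hScard hpar F₀ hF₀
  have hTcard : ∀ F ∈ T, F.card = d + 1 := fun F hF => hScard F (hTS hF)
  have hTcoe : ∀ F ∈ (↑T : Set (Finset V)), F.card = d + 1 := fun F hF => hTcard F hF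
  set Ω := gen (↑T : Set (Finset V)) with hΩdef
  have hdfΩ : dfaces Ω d = ↑T := dfaces_gen hTcoe
  have hΩΓ : Ω ⊆ Γ := by
    rintro G ⟨F, hF, hGF⟩
    exact hcomplex F (hSface F (hTS hF)).1 G hGF
  have hvertsΩ : verts Ω = ↑(T.biUnion id) := verts_gen_coe T
  have hvertsW : verts Ω ⊆ W := by
    rw [hvertsΩ]
    intro v hv
    simp only [Finset.coe_biUnion, Set.mem_iUnion, Finset.mem_coe, id_eq] at hv
    obtain ⟨F, hF, hvF⟩ := hv
    exact (hSface F (hTS hF)).2.1 hvF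
  have hubdT : ubd (chain T) = 0 := by
    apply ubd_chain_eq_zero hTcard
    intro f hf
    by_cases hex : ∃ F ∈ T, f ⊆ F
    · obtain ⟨F₁, hF₁, hfF₁⟩ := hex
      have hfΩ : f ∈ Ω := ⟨F₁, Finset.mem_coe.mpr hF₁, hfF₁⟩
      have := hTcyc.2.2.2.2 f hfΩ hf
      rwa [show {F | F ∈ dfaces Ω d ∧ f ⊆ F} = {F | F ∈ (↑T : Set (Finset V)) ∧ f ⊆ F} by
        rw [hdfΩ], ncard_filter] at this
    · push_neg at hex
      rw [Finset.filter_eq_empty_iff.mpr hex, Finset.card_empty]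
      exact Even.zero
  have hboundT : ∃ wT, ChainOn (induced (closure (verts Γ) Γ d) W) (d + 1) wT ∧
      ubd wT = chain T := by
    by_cases hdc : DComplete Ω d
    · -- Ω is d-complete : cone over a vertex of Ω
      obtain ⟨F₁, hF₁⟩ := hTne
      obtain ⟨v₀, hv₀⟩ : F₁.Nonempty := Finset.card_pos.mp (by rw [hTcard F₁ hF₁]; omega)
      have hv₀Ω : v₀ ∈ verts Ω := ⟨F₁, ⟨F₁, Finset.mem_coe.mpr hF₁, subset_rfl⟩, hv₀⟩
      refine ⟨cone v₀ (chain T), ?_, ?_⟩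
      · intro G hG
        obtain ⟨F, hFfil, rfl⟩ := Finset.mem_image.mp (cone_support_subset v₀ (chain T) hG)
        rw [chain_support] at hFfil
        obtain ⟨hFT, hv₀F⟩ := Finset.mem_filter.mp hFfil
        have hGcard : (insert v₀ F).card = d + 2 := by
          rw [Finset.card_insert_of_notMem hv₀F, hTcard F hFT]
        have hsubΩ : ↑(insert v₀ F) ⊆ verts Ω := by
          intro x hx
          rcases Finset.mem_insert.mp hx with rfl | hx
          · exact hv₀Ω
          · exact ⟨F, ⟨F, Finset.mem_coe.mpr hFT, subset_rfl⟩, hx⟩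
        refine ⟨topface_mem_induced_closure hW (hsubΩ.trans hvertsW) hGcard ?_, hGcard⟩
        intro U hU hUcard
        exact hΩΓ (hdc U ((Finset.coe_subset.mpr hU).trans hsubΩ) hUcard)
      · have := cone_homotopy v₀ (chain T)
        rwa [hubdT, cone_zero, add_zero] at this
    · -- Ω has a chord set
      obtain ⟨C, hC1, hC2, hC3, n', Ωi, hn2, hcyc, hunion, heven, hodd, hlt⟩ :=
        hchorded Ω ⟨hΩΓ, hTcyc⟩ hTmin hdc
      set Ai : Fin n' → Finset (Finset V) := fun i => (Set.toFinite (dfaces (Ωi i) d)).toFinset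
        with hAidef
      have hAicoe : ∀ i, (↑(Ai i) : Set (Finset V)) = dfaces (Ωi i) d :=
        fun i => Set.Finite.coe_toFinset _
      have hAimem : ∀ i F, F ∈ Ai i → F ∈ dfaces Ω d ∪ C := by
        intro i F hF
        rw [← hunion]
        exact Set.mem_iUnion.mpr ⟨i, by rw [← hAicoe i]; exact hF⟩
      have hAiface : ∀ i F, F ∈ Ai i → F ∈ Γ ∧ ↑F ⊆ W ∧ F.card = d + 1 := by
        intro i F hF
        rcases hAimem i F hF with hF1 | hF2
        · rw [hdfΩ] at hF1
          exact hSface F (hTS hF1)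
        · obtain ⟨hFΓ, hFcard⟩ := hC1 hF2
          exact ⟨hFΓ, (hC3 F hF2).trans hvertsW, hFcard⟩
      have hchain_i : ∀ i, ChainOn (induced (closure (verts Γ) Γ d) W) d (chain (Ai i)) := by
        intro i F hF
        rw [chain_support] at hF
        obtain ⟨h1, h2, h3⟩ := hAiface i F hF
        exact ⟨dface_mem_induced_closure h1 h2, h3⟩
      have hubd_i : ∀ i, ubd (chain (Ai i)) = 0 := by
        intro i
        apply ubd_chain_eq_zero (fun F hF => (hAiface i F hF).2.2)
        intro f hf
        by_cases hex : ∃ F ∈ Ai i, f ⊆ F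
        · obtain ⟨F₁, hF₁, hfF₁⟩ := hex
          have hF₁d : F₁ ∈ dfaces (Ωi i) d := by rw [← hAicoe i]; exact hF₁
          have hfΩi : f ∈ Ωi i := (hcyc i).1 F₁ hF₁d.1 f hfF₁
          have := (hcyc i).2.2.2.2 f hfΩi hf
          rwa [show {F | F ∈ dfaces (Ωi i) d ∧ f ⊆ F} = {F | F ∈ (↑(Ai i) : Set (Finset V)) ∧ f ⊆ F} by
            rw [hAicoe i], ncard_filter] at this
        · push_neg at hex
          rw [Finset.filter_eq_empty_iff.mpr hex, Finset.card_empty]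
          exact Even.zero
      have hverts_i : ∀ i, (((Ai i).biUnion id).card : ℕ) = (verts (Ωi i)).ncard := by
        intro i
        have hveq : verts (Ωi i) = ↑((Ai i).biUnion id) := by
          ext v
          simp only [Finset.coe_biUnion, Set.mem_iUnion, Finset.mem_coe, id_eq]
          constructor
          · rintro ⟨F, hF, hv⟩
            obtain ⟨G, hG, hFG⟩ := (hcyc i).2.1 F hF
            exact ⟨G, by rw [← hAicoe i] at hG; exact hG, hFG hv⟩
          · rintro ⟨F, hF, hv⟩
            have : F ∈ dfaces (Ωi i) d := by rw [← hAicoe i]; exact hF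
            exact ⟨F, this.1, hv⟩
        rw [hveq, Set.ncard_coe_finset]
      have hvertsT : (verts Ω).ncard ≤ n := by
        rw [hvertsΩ, Set.ncard_coe_finset]
        refine le_trans (Finset.card_le_card ?_) hn
        exact Finset.biUnion_subset_biUnion_of_subset_left id hTS
      have hrec : ∀ i, ∃ w, ChainOn (induced (closure (verts Γ) Γ d) W) (d + 1) w ∧
          ubd w = chain (Ai i) := by
        intro i
        have hlt_i : ((chain (Ai i)).support.biUnion id).card < n := by
          rw [chain_support, hverts_i i]
          exact lt_of_lt_of_le (hlt i) hvertsT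
        exact ihn ((chain (Ai i)).support.biUnion id).card hlt_i
          (chain (Ai i)).support.card (chain (Ai i)) le_rfl le_rfl
          (hchain_i i) (hubd_i i)
      choose wf hwf1 hwf2 using hrec
      refine ⟨∑ i, wf i, chainOn_sum _ _ (fun i _ => hwf1 i), ?_⟩
      rw [ubd_finset_sum, Finset.sum_congr rfl (fun i _ => hwf2 i)]
      -- ∑ i, chain (Ai i) = chain T
      ext F
      rw [Finsupp.finset_sum_apply]
      simp_rw [chain_apply]
      rw [Finset.sum_boole]
      have hncard : {i | F ∈ dfaces (Ωi i) d}.ncard =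
          (Finset.univ.filter fun i => F ∈ Ai i).card := by
        rw [show {i | F ∈ dfaces (Ωi i) d} = ↑(Finset.univ.filter fun i => F ∈ Ai i) by
          ext i
          simp only [Set.mem_setOf_eq, Finset.coe_filter, Finset.mem_univ, true_and,
            Set.mem_setOf_eq]
          rw [← hAicoe i]
          exact Iff.rfl, Set.ncard_coe_finset]
      by_cases hFT : F ∈ T
      · have hodd' := hodd F (by rw [hdfΩ]; exact Finset.mem_coe.mpr hFT)
        rw [hncard] at hodd'
        rw [if_pos hFT, odd_cast_zmod2 hodd']
      · by_cases hFC : F ∈ C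
        · have heven' := heven F hFC
          rw [hncard] at heven'
          rw [if_neg hFT, even_cast_zmod2 heven']
        · have hnone : ∀ i, F ∉ Ai i := by
            intro i hFi
            rcases hAimem i F hFi with h1 | h2
            · rw [hdfΩ] at h1
              exact hFT (Finset.mem_coe.mp h1)
            · exact hFC h2
          rw [if_neg hFT, Finset.filter_eq_empty_iff.mpr (fun i _ => hnone i),
            Finset.card_empty, Nat.cast_zero]
  obtain ⟨wT, hwTchain, hwTubd⟩ := hboundT
  -- recurse on the remaining smaller chain
  have hz'eq : z + chain T = chain (S \ T) := by
    rw [← hzchain, chain_add_chain_subset hTS]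
  have hm1 : 1 ≤ m := le_trans (Finset.card_pos.mpr ⟨F₀, hF₀⟩) hm
  have hrecz : ∃ w', ChainOn (induced (closure (verts Γ) Γ d) W) (d + 1) w' ∧
      ubd w' = z + chain T := by
    refine ihm (m - 1) (by omega) (z + chain T) ?_ ?_ ?_ ?_
    · refine le_trans (Finset.card_le_card ?_) hn
      rw [hz'eq, chain_support]
      exact Finset.biUnion_subset_biUnion_of_subset_left id (Finset.sdiff_subset)
    · rw [hz'eq, chain_support]
      have hT1 : 1 ≤ T.card := Finset.card_pos.mpr hTne
      have := Finset.card_sdiff_of_subset hTS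
      have := Finset.card_le_card hTS
      omega
    · intro F hF
      rw [hz'eq, chain_support] at hF
      exact hchain F (Finset.mem_sdiff.mp hF).1
    · rw [ubd_add, hz, hubdT, add_zero]
  obtain ⟨w', hw'chain, hw'ubd⟩ := hrecz
  refine ⟨w' + wT, chainOn_add hw'chain hwTchain, ?_⟩
  rw [ubd_add, hw'ubd, hwTubd, add_assoc, self_add_self, add_zero]

end main

section lift

lemma ubd_smul {k : Type*} [Semiring k] (a : k) (c : Finset V →₀ k) :
    ubd (a • c) = a • ubd c := by
  classical
  induction c using Finsupp.induction with
  | zero => simp [ubd_zero]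
  | single_add F b c _ _ ih =>
      rw [smul_add, ubd_add, ubd_add, smul_add, ih, Finsupp.smul_single, ubd_single, ubd_single,
        Finset.smul_sum]
      simp [Finsupp.smul_single]

lemma mapRange_finset_sum' {R S : Type*} [AddCommMonoid R] [AddCommMonoid S] (f : R → S)
    (h0 : f 0 = 0) (hadd : ∀ a b, f (a + b) = f a + f b)
    {ι : Type*} (s : Finset ι) (g : ι → Finset V →₀ R) :
    Finsupp.mapRange f h0 (∑ x ∈ s, g x) = ∑ x ∈ s, Finsupp.mapRange f h0 (g x) := by
  induction s using Finset.cons_induction with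
  | empty => simp
  | cons x s hx ih =>
      rw [Finset.sum_cons, Finset.sum_cons, Finsupp.mapRange_add hadd, ih]

lemma ubd_mapRange {R S : Type*} [AddCommMonoid R] [AddCommMonoid S] (f : R → S)
    (h0 : f 0 = 0) (hadd : ∀ a b, f (a + b) = f a + f b) (c : Finset V →₀ R) :
    ubd (c.mapRange f h0) = (ubd c).mapRange f h0 := by
  classical
  induction c using Finsupp.induction with
  | zero => simp [ubd_zero]
  | single_add F b c _ _ ih =>
      rw [Finsupp.mapRange_add hadd, ubd_add, ubd_add, Finsupp.mapRange_add hadd, ih,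
        Finsupp.mapRange_single, ubd_single, ubd_single, mapRange_finset_sum' f h0 hadd]
      congr 1
      exact Finset.sum_congr rfl fun v _ => (Finsupp.mapRange_single (hf := h0)).symm

lemma chainOn_smul {k : Type*} [Semiring k] {K : Set (Finset V)} {i : ℕ} (a : k)
    {c : Finset V →₀ k} (h : ChainOn K i c) : ChainOn K i (a • c) :=
  fun F hF => h F (Finsupp.support_smul hF)

lemma chainOn_mapRange {R S : Type*} [Zero R] [Zero S] (f : R → S) (h0 : f 0 = 0)
    {K : Set (Finset V)} {i : ℕ} {c : Finset V →₀ R} (h : ChainOn K i c) :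
    ChainOn K i (c.mapRange f h0) :=
  fun F hF => h F (Finsupp.support_mapRange hF)

lemma lift_bound {K : Set (Finset V)} {i : ℕ} (k : Type*) [Field k] [CharP k 2]
    (h2 : ∀ z : Finset V →₀ ZMod 2, ChainOn K i z → ubd z = 0 →
      ∃ w : Finset V →₀ ZMod 2, ChainOn K (i + 1) w ∧ ubd w = z) :
    RedHomZeroU K k i := by
  classical
  letI : Algebra (ZMod 2) k := ZMod.algebra k 2
  intro c hchain hc
  set φ : ZMod 2 → k := fun a => algebraMap (ZMod 2) k a with hφ
  have hφ0 : φ 0 = 0 := map_zero _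
  have hφadd : ∀ a b, φ (a + b) = φ a + φ b := fun a b => map_add _ a b
  set b := Module.Basis.ofVectorSpace (ZMod 2) k with hb
  have hx : ∀ x : k, x = ∑ j ∈ (b.repr x).support, (b.repr x) j • b j := by
    intro x
    conv_lhs => rw [← b.linearCombination_repr x]
    rw [Finsupp.linearCombination_apply, Finsupp.sum]
  set J : Finset (Module.Basis.ofVectorSpaceIndex (ZMod 2) k) :=
    c.support.biUnion fun F => (b.repr (c F)).support with hJ
  have hJ' : ∀ F, (b.repr (c F)).support ⊆ J := by
    intro F
    by_cases hF : F ∈ c.support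
    · exact fun j hj => Finset.mem_biUnion.mpr ⟨F, hF, hj⟩
    · rw [Finsupp.notMem_support_iff.mp hF]
      simp
  set zc : Module.Basis.ofVectorSpaceIndex (ZMod 2) k → (Finset V →₀ ZMod 2) :=
    fun j => Finsupp.onFinset c.support (fun F => b.repr (c F) j)
      (fun F h => by
        by_contra hF
        simp only [Finsupp.notMem_support_iff.mp hF, map_zero, Finsupp.coe_zero,
          Pi.zero_apply, ne_eq, not_true_eq_false] at h) with hzc
  have key1 : ∀ F, c F = ∑ j ∈ J, (b.repr (c F)) j • (b j : k) := by
    intro F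
    rw [← Finset.sum_subset (hJ' F) fun j _ hj => by
      rw [Finsupp.notMem_support_iff.mp hj, zero_smul]]
    exact hx (c F)
  have key2 : ∀ (g : Module.Basis.ofVectorSpaceIndex (ZMod 2) k → Finset V →₀ ZMod 2),
      ∀ F, (∑ j ∈ J, (b j : k) • Finsupp.mapRange φ hφ0 (g j)) F
        = ∑ j ∈ J, (g j F) • (b j : k) := by
    intro g F
    rw [Finsupp.finset_sum_apply]
    refine Finset.sum_congr rfl fun j _ => ?_
    rw [Finsupp.smul_apply, Finsupp.mapRange_apply]
    have : ∀ (x : ZMod 2) (y : k), x • y = y * φ x := fun x y => by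
      rw [Algebra.smul_def]; exact mul_comm _ _
    rw [this, smul_eq_mul]
  have hceq : c = ∑ j ∈ J, (b j : k) • Finsupp.mapRange φ hφ0 (zc j) := by
    ext F
    rw [key2 zc F]
    exact (key1 F).trans (Finset.sum_congr rfl fun j _ => rfl)
  have hindep : LinearIndependent (ZMod 2) (fun j : Module.Basis.ofVectorSpaceIndex (ZMod 2) k =>
      (b j : k)) := b.linearIndependent
  have hubd_zc : ∀ j ∈ J, ubd (zc j) = 0 := by
    intro j hj
    ext f
    have hsum : ∑ j' ∈ J, ((ubd (zc j')) f) • (b j' : k) = 0 := by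
      have h0 : ubd c = 0 := hc
      rw [hceq, ubd_finset_sum] at h0
      have hsc : ∑ j' ∈ J, ubd ((b j' : k) • Finsupp.mapRange φ hφ0 (zc j'))
          = ∑ j' ∈ J, (b j' : k) • Finsupp.mapRange φ hφ0 (ubd (zc j')) :=
        Finset.sum_congr rfl fun j' _ => by rw [ubd_smul, ubd_mapRange φ hφ0 hφadd]
      rw [hsc] at h0
      have := congrArg (fun x : Finset V →₀ k => x f) h0
      simpa [key2 (fun j' => ubd (zc j')) f] using this
    have := linearIndependent_iff'.mp hindep J (fun j' => (ubd (zc j')) f) hsum j hj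
    simpa using this
  have hwj : ∀ j, ∃ w : Finset V →₀ ZMod 2, ChainOn K (i + 1) w ∧
      (j ∈ J → ubd w = zc j) := by
    intro j
    by_cases hj : j ∈ J
    · obtain ⟨w, hw1, hw2⟩ := h2 (zc j)
        (fun F hF => hchain F (Finsupp.support_onFinset_subset hF)) (hubd_zc j hj)
      exact ⟨w, hw1, fun _ => hw2⟩
    · exact ⟨0, chainOn_zero _ _, fun h => absurd h hj⟩
  choose w hw1 hw2 using hwj
  refine ⟨∑ j ∈ J, (b j : k) • Finsupp.mapRange φ hφ0 (w j), ?_, ?_⟩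
  · exact chainOn_sum _ _ fun j _ => chainOn_smul _ (chainOn_mapRange φ hφ0 (hw1 j))
  · rw [ubd_finset_sum]
    rw [Finset.sum_congr rfl fun j hj => by
      rw [ubd_smul, ubd_mapRange φ hφ0 hφadd, hw2 j hj]]
    exact hceq.symm

end lift

/-- Proposition 5.3: if `Γ` is `d`-chorded then for every `W ⊆ V(Γ)` and
every field `k` of characteristic 2, `H̃_i(Δ_d(Γ)_W; k) = 0` for `0 ≤ i ≤ d-2` and
`i = d`. -/
theorem dChorded_vanishing_homology {V : Type*} [DecidableEq V] [Fintype V]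
    (Γ : Set (Finset V)) (d : ℕ)
    (hcomplex : IsComplex Γ) (hpure : IsPureD Γ d) (hchorded : DChorded Γ d)
    (W : Set V) (hW : W ⊆ verts Γ)
    (k : Type*) [Field k] [CharP k 2]
    (i : ℕ) (hi : i + 2 ≤ d ∨ i = d) :
    RedHomZeroU (induced (closure (verts Γ) Γ d) W) k i := by
  classical
  rcases hi with hi | rfl
  · -- low-dimensional case : the closure contains the full (d-1)-skeleton on W
    intro c hchain hc
    rcases Finset.eq_empty_or_nonempty c.support with hemp | ⟨F₀, hF₀⟩
    · exact ⟨0, chainOn_zero _ _, by rw [ubd_zero, Finsupp.support_eq_empty.mp hemp]⟩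
    obtain ⟨h𝒦₀, hcard₀⟩ := hchain F₀ hF₀
    obtain ⟨v₀, hv₀⟩ : F₀.Nonempty := Finset.card_pos.mp (by omega)
    refine ⟨cone v₀ c, ?_, ?_⟩
    · intro G hG
      obtain ⟨F, hFfil, rfl⟩ := Finset.mem_image.mp (cone_support_subset v₀ c hG)
      obtain ⟨hFsupp, hv₀F⟩ := Finset.mem_filter.mp hFfil
      obtain ⟨hF𝒦, hFcard⟩ := hchain F hFsupp
      have hFW : ↑F ⊆ W := hF𝒦.2
      have hv₀W : v₀ ∈ W := (hchain F₀ hF₀).1.2 hv₀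
      have hGW : ↑(insert v₀ F) ⊆ W := by
        intro x hx
        rcases Finset.mem_insert.mp (Finset.mem_coe.mp hx) with rfl | hx
        · exact hv₀W
        · exact hFW hx
      have hGcard : (insert v₀ F).card = i + 2 := by
        rw [Finset.card_insert_of_notMem hv₀F, hFcard]
      exact ⟨smallface_mem_induced_closure hW hGW (by omega), by omega⟩
    · have := cone_homotopy v₀ c
      rwa [hc, cone_zero, add_zero] at this
  · -- top-dimensional case : the chorded structure
    exact lift_bound k (fun z hz1 hz2 =>
      gf2_bound hcomplex hchorded hW (z.support.biUnion id).card z.support.card z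
        le_rfl le_rfl hz1 hz2)

end ChordedPaper
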